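/- arXiv:1904.10602 — 2 statements merged into one kernel-verified Lean document; each statement's English description precedes it below -/
import Mathlib

section
/- Let n ≥ 1 and k, m ≥ 0. Then, as polynomials in x_0,…,x_{m−1}, the generating polynomial of single-row n-lecture hall tableaux satisfies L^n_{(k)}(x_0,…,x_{m−1}) = (x_0 + x_1 + … + x_{m−1})^k · binom(n+k−1, k). -/
open Finset MvPolynomial

/-- The cells `(i,j)` (1-indexed) of the skew shape `λ/μ`, where `l i = λ_i`, `m i = μ_i`,
and all rows with cells have index at most `L`. -/
def skewCells (l m : ℕ → ℕ) (L : ℕ) : Finset (ℕ × ℕ) :=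
  (Finset.Icc 1 L ×ˢ Finset.Icc 1 (l 1)).filter fun c => m c.1 < c.2 ∧ c.2 ≤ l c.1

/-- Bounded lecture hall tableaux `LHT_{n,m}` on a given cell set (tableaux are normalized
to be `0` outside the cells).  The lecture hall inequalities
`T(i,j)/(n+j-i) ≥ T(i,j+1)/(n+j+1-i)` and `T(i,j)/(n+j-i) > T(i+1,j)/(n+j-i-1)`
are written in cross-multiplied form. -/
def LHTb (n m : ℕ) (cells : Finset (ℕ × ℕ)) : Set ((ℕ × ℕ) → ℕ) :=
  {T | (∀ c, c ∉ cells → T c = 0) ∧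
    (∀ i j, (i, j) ∈ cells → (i, j + 1) ∈ cells →
      T (i, j + 1) * (n + j - i) ≤ T (i, j) * (n + j + 1 - i)) ∧
    (∀ i j, (i, j) ∈ cells → (i + 1, j) ∈ cells →
      T (i + 1, j) * (n + j - i) < T (i, j) * (n + j - i - 1)) ∧
    (∀ c ∈ cells, T c / (n + c.2 - c.1) < m)}

/-- Semistandard `n`-content tableaux on a given cell set: entries weakly decrease along
rows, strictly decrease down columns, and satisfy `T(i,j) < n + j - i`. -/
def SSCTset (n : ℕ) (cells : Finset (ℕ × ℕ)) : Set ((ℕ × ℕ) → ℕ) :=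
  {T | (∀ c, c ∉ cells → T c = 0) ∧
    (∀ i j, (i, j) ∈ cells → (i, j + 1) ∈ cells → T (i, j + 1) ≤ T (i, j)) ∧
    (∀ i j, (i, j) ∈ cells → (i + 1, j) ∈ cells → T (i + 1, j) < T (i, j)) ∧
    (∀ c ∈ cells, T c < n + c.2 - c.1)}

/-- Semistandard Young tableaux with entries in `{0,…,n-1}` on a given cell set. -/
def SSYTset (n : ℕ) (cells : Finset (ℕ × ℕ)) : Set ((ℕ × ℕ) → ℕ) :=
  {T | (∀ c, c ∉ cells → T c = 0) ∧
    (∀ i j, (i, j) ∈ cells → (i, j + 1) ∈ cells → T (i, j + 1) ≤ T (i, j)) ∧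
    (∀ i j, (i, j) ∈ cells → (i + 1, j) ∈ cells → T (i + 1, j) < T (i, j)) ∧
    (∀ c ∈ cells, T c < n)}

/-- Standard Young tableaux on a given cell set: each of `1,…,N` (where `N` is the number
of cells) appears exactly once, and entries decrease along rows and down columns. -/
def SYTset (cells : Finset (ℕ × ℕ)) : Set ((ℕ × ℕ) → ℕ) :=
  {T | (∀ c, c ∉ cells → T c = 0) ∧
    (∀ k, 1 ≤ k → k ≤ cells.card → ∃! c, c ∈ cells ∧ T c = k) ∧
    (∀ i j, (i, j) ∈ cells → (i, j + 1) ∈ cells → T (i, j + 1) < T (i, j)) ∧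
    (∀ i j, (i, j) ∈ cells → (i + 1, j) ∈ cells → T (i + 1, j) < T (i, j))}

/-- The generating polynomial `L^n(x) = Σ_L Π x_{⌊L(i,j)/(n+j-i)⌋}` of bounded
lecture hall tableaux. -/
noncomputable def lhtGF {R : Type*} [CommSemiring R] (n m : ℕ) (cells : Finset (ℕ × ℕ))
    (x : ℕ → R) : R :=
  ∑ᶠ T ∈ LHTb n m cells, ∏ c ∈ cells, x (T c / (n + c.2 - c.1))

/-- The generating polynomial `S^n(y) = Σ_S Π y_{S(i,j)}` of semistandard `n`-content
tableaux. -/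
noncomputable def ssctGF {R : Type*} [CommSemiring R] (n : ℕ) (cells : Finset (ℕ × ℕ))
    (y : ℕ → R) : R :=
  ∑ᶠ T ∈ SSCTset n cells, ∏ c ∈ cells, y (T c)

/-- The Schur polynomial `s_λ(z_1,…,z_n) = Σ_{T ∈ SSYT_n(λ)} Π z_{T(i,j)+1}`. -/
noncomputable def schurGF {R : Type*} [CommSemiring R] (n L : ℕ) (l : ℕ → ℕ) (z : ℕ → R) : R :=
  ∑ᶠ T ∈ SSYTset n (skewCells l (fun _ => 0) L),
    ∏ c ∈ skewCells l (fun _ => 0) L, z (T c + 1)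

/-- The one-row partition `(k)`. -/
def rowShape (k : ℕ) : ℕ → ℕ := fun i => if i = 1 then k else 0

/-- `L^N_{(k)}(x)` for an integer `k`, equal to `0` when `k < 0`. -/
noncomputable def lhtRowGF {R : Type*} [CommSemiring R] (N m : ℕ) (k : ℤ) (x : ℕ → R) : R :=
  if k < 0 then 0 else lhtGF N m (skewCells (rowShape k.toNat) (fun _ => 0) 1) x

/-- `S^N_{(k)}(y)` for an integer `k`, equal to `0` when `k < 0`. -/
noncomputable def ssctRowGF {R : Type*} [CommSemiring R] (N : ℕ) (k : ℤ) (y : ℕ → R) : R :=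
  if k < 0 then 0 else ssctGF N (skewCells (rowShape k.toNat) (fun _ => 0) 1) y

/-- The complete homogeneous polynomial `h_k(z_0,…,z_a)`. -/
noncomputable def hpoly {R : Type*} [CommSemiring R] (k a : ℕ) (z : ℕ → R) : R :=
  ∑ s ∈ (Finset.range (a + 1)).sym k, (Multiset.map z s.1).prod

/-- `h_k(z_0,…,z_a)` for an integer `k`, equal to `0` when `k < 0`. -/
noncomputable def hpolyZ {R : Type*} [CommSemiring R] (k : ℤ) (a : ℕ) (z : ℕ → R) : R :=
  if k < 0 then 0 else hpoly k.toNat a z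

/-- Partitions `p` with `lo ⊆ p ⊆ hi`, of length at most `L`, normalized so that
`p 0 = 0` (indices `≥ 1` carry the parts). -/
def PartitionsBetween (lo hi : ℕ → ℕ) (L : ℕ) : Set (ℕ → ℕ) :=
  {p | p 0 = 0 ∧ (∀ i j, 1 ≤ i → i ≤ j → p j ≤ p i) ∧ (∀ i, L < i → p i = 0) ∧
    ∀ i, 1 ≤ i → lo i ≤ p i ∧ p i ≤ hi i}

/-- Extended `n`-lecture hall tableaux with marks in `{0,…,m-1} ∪ {∞}`; a cell carries a
pair (value, mark), where the mark `m` encodes `∞`. -/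
def LHTstar (n m : ℕ) (cells : Finset (ℕ × ℕ)) : Set ((ℕ × ℕ) → ℕ × ℕ) :=
  {T | (∀ c, c ∉ cells → T c = (0, 0)) ∧
    (∀ c ∈ cells, (T c).1 < n + c.2 - c.1 ∧ (T c).2 ≤ m) ∧
    (∀ i j, (i, j) ∈ cells → (i, j + 1) ∈ cells →
      (T (i, j + 1)).2 < (T (i, j)).2 ∨
        ((T (i, j + 1)).2 = (T (i, j)).2 ∧ (T (i, j + 1)).1 ≤ (T (i, j)).1)) ∧
    (∀ i j, (i, j) ∈ cells → (i + 1, j) ∈ cells →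
      (T (i + 1, j)).2 < (T (i, j)).2 ∨
        ((T (i + 1, j)).2 = (T (i, j)).2 ∧ (T (i + 1, j)).1 < (T (i, j)).1))}

/-- Marked semistandard `n`-content tableaux with marks in `{0,…,m-1} ∪ {∞}` (the mark `m`
encodes `∞`): the values form a semistandard `n`-content tableau and marks are arbitrary. -/
def SSCTstar (n m : ℕ) (cells : Finset (ℕ × ℕ)) : Set ((ℕ × ℕ) → ℕ × ℕ) :=
  {T | (∀ c, c ∉ cells → T c = (0, 0)) ∧
    (∀ c ∈ cells, (T c).1 < n + c.2 - c.1 ∧ (T c).2 ≤ m) ∧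
    (∀ i j, (i, j) ∈ cells → (i, j + 1) ∈ cells → (T (i, j + 1)).1 ≤ (T (i, j)).1) ∧
    (∀ i j, (i, j) ∈ cells → (i + 1, j) ∈ cells → (T (i + 1, j)).1 < (T (i, j)).1)}

/-- `r^{(n)}_μ`: the number of fillings of `μ` with positive integers, strictly decreasing
along rows, weakly decreasing down columns, entries in row `i` lying in `{1,…,n-i}`. -/
noncomputable def rcount (n L : ℕ) (mu : ℕ → ℕ) : ℕ :=
  Nat.card {T : (ℕ × ℕ) → ℕ |
    (∀ c, c ∉ skewCells mu (fun _ => 0) L → T c = 0) ∧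
    (∀ c ∈ skewCells mu (fun _ => 0) L, 1 ≤ T c ∧ T c ≤ n - c.1) ∧
    (∀ i j, (i, j) ∈ skewCells mu (fun _ => 0) L →
      (i, j + 1) ∈ skewCells mu (fun _ => 0) L → T (i, j + 1) < T (i, j)) ∧
    (∀ i j, (i, j) ∈ skewCells mu (fun _ => 0) L →
      (i + 1, j) ∈ skewCells mu (fun _ => 0) L → T (i + 1, j) ≤ T (i, j))}


/-! ### Auxiliary development for the one-row case -/

namespace LhtOneRow

open Finset

/-- Value-lists of single-row lecture hall tableaux: a list in `Vset n k B` has length `k`,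
its head `v` satisfies `v < B`, and its tail lies in `Vset (n+1) (k-1) (v + v/n + 1)`. -/
def Vset : ℕ → ℕ → ℕ → Finset (List ℕ)
  | _, 0, _ => {[]}
  | n, k+1, B => (Finset.range B).biUnion fun v => ((Vset (n+1) k (v + v/n + 1)).image (v :: ·))

def ChainV : ℕ → ℕ → List ℕ → Prop
  | _, _, [] => True
  | n, B, v :: t => v < B ∧ ChainV (n+1) (v + v / n + 1) t

@[simp] lemma chainV_nil (n B : ℕ) : ChainV n B [] := trivial

@[simp] lemma chainV_cons {n B v : ℕ} {t : List ℕ} :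
    ChainV n B (v :: t) ↔ v < B ∧ ChainV (n+1) (v + v / n + 1) t := Iff.rfl

/-- hockey stick identity -/
lemma hs (t : ℕ) : ∀ n : ℕ, ∑ r ∈ range n, (r + t).choose t = (n + t).choose (t + 1)
  | 0 => by simp
  | n+1 => by
    rw [Finset.sum_range_succ, hs t n]
    have : n + 1 + t = (n + t) + 1 := by omega
    rw [this, Nat.choose_succ_succ' (n + t) t]
    omega

lemma chooseId {n k t : ℕ} (hn : 1 ≤ n) (ht : t ≤ k) :
    (n + t).choose (t + 1) * (n + k).choose (k - t) =
      (n + k).choose (k + 1) * (k + 1).choose (t + 1) := by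
  have h1 : (n + k).choose (k - t) = (n + k).choose (n + t) := by
    rw [← Nat.choose_symm (by omega : n + t ≤ n + k)]
    congr 1
    omega
  have h2 : (n + k).choose (n + t) * (n + t).choose (t + 1) =
      (n + k).choose (t + 1) * ((n + k) - (t + 1)).choose ((n + t) - (t + 1)) :=
    Nat.choose_mul (by omega)
  have h3 : (n + k).choose (k + 1) * (k + 1).choose (t + 1) =
      (n + k).choose (t + 1) * ((n + k) - (t + 1)).choose ((k + 1) - (t + 1)) :=
    Nat.choose_mul (by omega)
  have h4 : ((n + k) - (t + 1)).choose ((n + t) - (t + 1)) =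
      ((n + k) - (t + 1)).choose ((k + 1) - (t + 1)) := by
    rw [← Nat.choose_symm (by omega : (k + 1) - (t + 1) ≤ (n + k) - (t + 1))]
    congr 1
    omega
  rw [h1, mul_comm, h2, h4, ← h3]

lemma sum_range_mul' {M : Type*} [AddCommMonoid M] (f : ℕ → M) (n : ℕ) :
    ∀ a : ℕ, ∑ v ∈ range (a * n), f v = ∑ q ∈ range a, ∑ r ∈ range n, f (q * n + r)
  | 0 => by simp
  | a+1 => by
    rw [Finset.sum_range_succ, ← sum_range_mul' f n a, add_mul, one_mul,
      Finset.sum_range_add]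

lemma sum_range_block {M : Type*} [AddCommMonoid M] (f : ℕ → M) (n a s : ℕ) :
    ∑ v ∈ range (a * n + s), f v =
      (∑ q ∈ range a, ∑ r ∈ range n, f (q * n + r)) + ∑ r ∈ range s, f (a * n + r) := by
  rw [Finset.sum_range_add, sum_range_mul']

section Ring
variable {R : Type*} [CommRing R] (x : ℕ → R)

def wlist : ℕ → List ℕ → R
  | _, [] => 1
  | n, v :: t => x (v / n) * wlist (n+1) t

lemma hrsumR (m t : ℕ) : ∑ r ∈ range m, ((r + t).choose t : R) = ((m + t).choose (t + 1) : R) := by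
  rw [← Nat.cast_sum]
  exact_mod_cast congrArg (Nat.cast : ℕ → R) (hs t m)

/-- inner telescoping sum -/
lemma telescope (n k : ℕ) (hn : 1 ≤ n) (Q : ℕ) :
    ∑ q ∈ range Q, ∑ t ∈ range (k + 1),
        (((n + t).choose (t + 1) : R) * ((n + k).choose (k - t)) *
          (x q ^ (t + 1) * (∑ i ∈ range q, x i) ^ (k - t))) =
      ((n + k).choose (k + 1) : R) * (∑ i ∈ range Q, x i) ^ (k + 1) := by
  have key : ∀ q : ℕ, ∑ t ∈ range (k + 1),
      (((n + t).choose (t + 1) : R) * ((n + k).choose (k - t)) *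
        (x q ^ (t + 1) * (∑ i ∈ range q, x i) ^ (k - t))) =
      ((n + k).choose (k + 1) : R) *
        ((∑ i ∈ range (q + 1), x i) ^ (k + 1) - (∑ i ∈ range q, x i) ^ (k + 1)) := by
    intro q
    set P : R := ∑ i ∈ range q, x i with hP
    have h1 : ∀ t ∈ range (k + 1),
        (((n + t).choose (t + 1) : R) * ((n + k).choose (k - t)) *
          (x q ^ (t + 1) * P ^ (k - t))) =
        ((n + k).choose (k + 1) : R) *
          (x q ^ (t + 1) * P ^ ((k + 1) - (t + 1)) * ((k + 1).choose (t + 1))) := by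
      intro t ht
      rw [Finset.mem_range] at ht
      have := chooseId (n := n) (k := k) (t := t) hn (by omega)
      have hcast : (((n + t).choose (t + 1) : R) * ((n + k).choose (k - t))) =
          (((n + k).choose (k + 1) : R) * ((k + 1).choose (t + 1))) := by
        exact_mod_cast congrArg (Nat.cast : ℕ → R) this
      have hkk : (k + 1) - (t + 1) = k - t := by omega
      rw [hkk]
      calc ((n + t).choose (t + 1) : R) * ((n + k).choose (k - t)) *
            (x q ^ (t + 1) * P ^ (k - t))
          = (((n + t).choose (t + 1) : R) * ((n + k).choose (k - t))) *
            (x q ^ (t + 1) * P ^ (k - t)) := by ring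
        _ = (((n + k).choose (k + 1) : R) * ((k + 1).choose (t + 1))) *
            (x q ^ (t + 1) * P ^ (k - t)) := by rw [hcast]
        _ = ((n + k).choose (k + 1) : R) *
            (x q ^ (t + 1) * P ^ (k - t) * ((k + 1).choose (t + 1))) := by ring
    rw [Finset.sum_congr rfl h1, ← Finset.mul_sum]
    congr 1
    have hadd : (x q + P) ^ (k + 1) =
        ∑ s ∈ range (k + 2), x q ^ s * P ^ ((k + 1) - s) * ((k + 1).choose s) := add_pow _ _ _
    have hshift : ∑ s ∈ range (k + 2), (x q ^ s * P ^ ((k + 1) - s) * ((k + 1).choose s) : R) =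
        (∑ t ∈ range (k + 1), x q ^ (t + 1) * P ^ ((k + 1) - (t + 1)) * ((k + 1).choose (t + 1)))
          + x q ^ 0 * P ^ (k + 1 - 0) * ((k + 1).choose 0) := Finset.sum_range_succ' _ _
    have hP1 : ∑ i ∈ range (q + 1), x i = x q + P := by rw [Finset.sum_range_succ]; ring
    rw [hP1, hadd, hshift]
    simp
  rw [Finset.sum_congr rfl (fun q _ => key q), ← Finset.mul_sum,
    Finset.sum_range_sub (fun q => (∑ i ∈ range q, x i) ^ (k + 1))]
  simp

lemma vset_cons_sum (n k B : ℕ) :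
    ∑ l ∈ Vset n (k+1) B, wlist x n l
      = ∑ v ∈ range B, x (v / n) * ∑ l ∈ Vset (n+1) k (v + v / n + 1), wlist x (n+1) l := by
  show ∑ l ∈ (Finset.range B).biUnion fun v => ((Vset (n+1) k (v + v/n + 1)).image (v :: ·)),
      wlist x n l = _
  rw [Finset.sum_biUnion]
  · refine Finset.sum_congr rfl fun v _ => ?_
    rw [Finset.sum_image (fun a _ b _ h => by injection h), Finset.mul_sum]
    exact Finset.sum_congr rfl fun l _ => rfl
  · intro a _ b _ hab
    refine Finset.disjoint_left.2 fun l hla hlb => hab ?_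
    simp only [Finset.mem_image] at hla hlb
    obtain ⟨la, _, rfl⟩ := hla
    obtain ⟨lb, _, h⟩ := hlb
    injection h.symm

lemma vset_sum : ∀ (k : ℕ), ∀ (n q₀ r₀ : ℕ), 1 ≤ n → r₀ < n →
    ∑ l ∈ Vset n k (q₀ * n + r₀ + 1), wlist x n l =
      ∑ t ∈ range (k + 1), ((r₀ + t).choose t : R) * ((n + k - 1).choose (k - t)) *
        (x q₀ ^ t * (∑ i ∈ range q₀, x i) ^ (k - t))
  | 0, n, q₀, r₀, hn, hr => by simp [Vset, wlist]
  | (k+1), n, q₀, r₀, hn, hr => by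
    have hrsum : ∀ m t : ℕ, ∑ r ∈ range m, ((r + t).choose t : R) = ((m + t).choose (t + 1) : R) := by
      intro m t
      rw [← Nat.cast_sum]
      exact_mod_cast congrArg (Nat.cast : ℕ → R) (hs t m)
    -- the summand after applying the IH
    have hterm : ∀ q r, r < n →
        x ((q * n + r) / n) * ∑ l ∈ Vset (n+1) k ((q * n + r) + (q * n + r) / n + 1),
            wlist x (n+1) l
        = x q * ∑ t ∈ range (k+1), ((r + t).choose t : R) * ((n + k).choose (k - t)) *
            (x q ^ t * (∑ i ∈ range q, x i) ^ (k - t)) := by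
      intro q r hrn
      have hdiv : (q * n + r) / n = q := by
        rw [mul_comm, Nat.mul_add_div (by omega), Nat.div_eq_of_lt hrn, add_zero]
      rw [hdiv]
      congr 1
      have hB : q * n + r + q + 1 = q * (n + 1) + r + 1 := by ring
      rw [hB, vset_sum k (n+1) q r (by omega) (by omega)]
      refine Finset.sum_congr rfl fun t _ => ?_
      rw [show n + 1 + k - 1 = n + k from by omega]
    have hB : q₀ * n + r₀ + 1 = q₀ * n + (r₀ + 1) := by omega
    rw [vset_cons_sum, hB, sum_range_block]
    -- Part 1
    have part1 : ∑ q ∈ range q₀, ∑ r ∈ range n,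
        (x ((q * n + r) / n) * ∑ l ∈ Vset (n+1) k ((q * n + r) + (q * n + r) / n + 1),
          wlist x (n+1) l)
        = ((n + k).choose (k + 1) : R) * (∑ i ∈ range q₀, x i) ^ (k + 1) := by
      rw [← telescope x n k hn q₀]
      refine Finset.sum_congr rfl fun q _ => ?_
      rw [Finset.sum_congr rfl fun r hr => hterm q r (Finset.mem_range.1 hr),
        ← Finset.mul_sum, Finset.sum_comm]
      have : ∀ t ∈ range (k+1), ∑ r ∈ range n,
          (((r + t).choose t : R) * ((n + k).choose (k - t)) *
            (x q ^ t * (∑ i ∈ range q, x i) ^ (k - t)))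
          = ((n + t).choose (t + 1) : R) * (((n + k).choose (k - t) : R) *
            (x q ^ t * (∑ i ∈ range q, x i) ^ (k - t))) := by
        intro t _
        rw [← Finset.sum_mul, ← Finset.sum_mul, hrsum n t]
        ring
      rw [Finset.sum_congr rfl this, Finset.mul_sum]
      refine Finset.sum_congr rfl fun t _ => ?_
      ring
    -- Part 2
    have part2 : ∑ r ∈ range (r₀ + 1),
        (x ((q₀ * n + r) / n) * ∑ l ∈ Vset (n+1) k ((q₀ * n + r) + (q₀ * n + r) / n + 1),
          wlist x (n+1) l)
        = ∑ t ∈ range (k+1), ((r₀ + 1 + t).choose (t + 1) : R) * ((n + k).choose (k - t)) *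
            (x q₀ ^ (t + 1) * (∑ i ∈ range q₀, x i) ^ (k - t)) := by
      rw [Finset.sum_congr rfl fun r hr => hterm q₀ r (by have := Finset.mem_range.1 hr; omega),
        ← Finset.mul_sum, Finset.sum_comm]
      have : ∀ t ∈ range (k+1), ∑ r ∈ range (r₀ + 1),
          (((r + t).choose t : R) * ((n + k).choose (k - t)) *
            (x q₀ ^ t * (∑ i ∈ range q₀, x i) ^ (k - t)))
          = ((r₀ + 1 + t).choose (t + 1) : R) * (((n + k).choose (k - t) : R) *
            (x q₀ ^ t * (∑ i ∈ range q₀, x i) ^ (k - t))) := by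
        intro t _
        rw [← Finset.sum_mul, ← Finset.sum_mul, hrsum (r₀ + 1) t]
        ring
      rw [Finset.sum_congr rfl this, Finset.mul_sum]
      refine Finset.sum_congr rfl fun t _ => ?_
      ring
    rw [part1, part2]
    -- now the RHS
    rw [show n + (k + 1) - 1 = n + k from by omega]
    rw [Finset.sum_range_succ' (fun t => ((r₀ + t).choose t : R) * ((n + k).choose (k + 1 - t)) *
      (x q₀ ^ t * (∑ i ∈ range q₀, x i) ^ (k + 1 - t))) (k + 1)]
    have : ∀ t ∈ range (k + 1),
        ((r₀ + (t + 1)).choose (t + 1) : R) * ((n + k).choose (k + 1 - (t + 1))) *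
          (x q₀ ^ (t + 1) * (∑ i ∈ range q₀, x i) ^ (k + 1 - (t + 1)))
        = ((r₀ + 1 + t).choose (t + 1) : R) * ((n + k).choose (k - t)) *
          (x q₀ ^ (t + 1) * (∑ i ∈ range q₀, x i) ^ (k - t)) := by
      intro t _
      rw [show r₀ + (t + 1) = r₀ + 1 + t from by omega, show k + 1 - (t + 1) = k - t from by omega]
    rw [Finset.sum_congr rfl this]
    simp
    ring

lemma vset_sum_top (n m : ℕ) (hn : 1 ≤ n) :
    ∀ k : ℕ, ∑ l ∈ Vset n k (m * n), wlist x n l =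
      ((n + k - 1).choose k : R) * (∑ i ∈ range m, x i) ^ k
  | 0 => by simp [Vset, wlist]
  | (k+1) => by
    have hterm : ∀ q r, r < n →
        x ((q * n + r) / n) * ∑ l ∈ Vset (n+1) k ((q * n + r) + (q * n + r) / n + 1),
            wlist x (n+1) l
        = x q * ∑ t ∈ range (k+1), ((r + t).choose t : R) * ((n + k).choose (k - t)) *
            (x q ^ t * (∑ i ∈ range q, x i) ^ (k - t)) := by
      intro q r hrn
      have hdiv : (q * n + r) / n = q := by
        rw [mul_comm, Nat.mul_add_div (by omega), Nat.div_eq_of_lt hrn, add_zero]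
      rw [hdiv]
      congr 1
      have hB : q * n + r + q + 1 = q * (n + 1) + r + 1 := by ring
      rw [hB, vset_sum x k (n+1) q r (by omega) (by omega)]
      refine Finset.sum_congr rfl fun t _ => ?_
      rw [show n + 1 + k - 1 = n + k from by omega]
    rw [vset_cons_sum, sum_range_mul', show n + (k + 1) - 1 = n + k from by omega,
      ← telescope x n k hn m]
    refine Finset.sum_congr rfl fun q _ => ?_
    rw [Finset.sum_congr rfl fun r hr => hterm q r (Finset.mem_range.1 hr),
      ← Finset.mul_sum, Finset.sum_comm]
    have : ∀ t ∈ range (k+1), ∑ r ∈ range n,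
        (((r + t).choose t : R) * ((n + k).choose (k - t)) *
          (x q ^ t * (∑ i ∈ range q, x i) ^ (k - t)))
        = ((n + t).choose (t + 1) : R) * (((n + k).choose (k - t) : R) *
          (x q ^ t * (∑ i ∈ range q, x i) ^ (k - t))) := by
      intro t _
      rw [← Finset.sum_mul, ← Finset.sum_mul, hrsumR n t]
      ring
    rw [Finset.sum_congr rfl this, Finset.mul_sum]
    refine Finset.sum_congr rfl fun t _ => ?_
    ring

end Ring

lemma mem_Vset : ∀ (k n B : ℕ) (l : List ℕ), l ∈ Vset n k B ↔ l.length = k ∧ ChainV n B l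
  | 0, n, B, l => by
    show l ∈ ({[]} : Finset (List ℕ)) ↔ _
    simp only [Finset.mem_singleton]
    constructor
    · rintro rfl; exact ⟨rfl, trivial⟩
    · rintro ⟨hl, -⟩; exact List.length_eq_zero_iff.1 hl
  | k+1, n, B, l => by
    show l ∈ (Finset.range B).biUnion _ ↔ _
    rw [Finset.mem_biUnion]
    constructor
    · rintro ⟨v, hv, hl⟩
      rw [Finset.mem_image] at hl
      obtain ⟨t, ht, rfl⟩ := hl
      obtain ⟨htl, htc⟩ := (mem_Vset k (n+1) _ t).1 ht
      exact ⟨by simp [htl], Finset.mem_range.1 hv, htc⟩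
    · rintro ⟨hl, hc⟩
      cases l with
      | nil => simp at hl
      | cons v t =>
        obtain ⟨hv, hc⟩ := chainV_cons.1 hc
        exact ⟨v, Finset.mem_range.2 hv,
          Finset.mem_image.2 ⟨t, (mem_Vset k (n+1) _ t).2 ⟨by simpa using hl, hc⟩, rfl⟩⟩

lemma chain_getD_lt (m : ℕ) :
    ∀ (l : List ℕ) (n B : ℕ), 1 ≤ n → ChainV n B l → B ≤ m * n →
      ∀ j < l.length, l.getD j 0 / (n + j) < m
  | [], _, _, _, _, _ => by simp
  | v :: t, n, B, hn, hc, hB => by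
    obtain ⟨hv, hc⟩ := chainV_cons.1 hc
    have hvm : v < m * n := lt_of_lt_of_le hv hB
    have hm : 1 ≤ m := by
      rcases Nat.eq_zero_or_pos m with h | h
      · subst h; simp at hvm
      · exact h
    have hq : v / n < m := (Nat.div_lt_iff_lt_mul (by omega)).2 (by omega)
    have hnext : v + v / n + 1 ≤ m * (n + 1) := by
      have : m * (n + 1) = m * n + m := by ring
      omega
    intro j hj
    cases j with
    | zero => simpa using hq
    | succ j =>
      have := chain_getD_lt m t (n+1) _ (by omega) hc hnext j (by simpa using hj)
      have e : n + (j + 1) = n + 1 + j := by omega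
      simp only [List.getD_cons_succ, e]
      exact this

lemma chain_step :
    ∀ (l : List ℕ) (n B : ℕ), 1 ≤ n → ChainV n B l →
      ∀ j, j + 1 < l.length → l.getD (j+1) 0 * (n + j) ≤ l.getD j 0 * (n + j + 1)
  | [], _, _, _, _ => by simp
  | v :: t, n, B, hn, hc => by
    obtain ⟨hv, hc⟩ := chainV_cons.1 hc
    intro j hj
    cases j with
    | zero =>
      cases t with
      | nil => simp at hj
      | cons w s =>
        obtain ⟨hw, -⟩ := chainV_cons.1 hc
        have hw' : w ≤ v + v / n := by omega
        have : w * n ≤ (v + v / n) * n := Nat.mul_le_mul_right n hw'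
        have hdm : v / n * n ≤ v := Nat.div_mul_le_self v n
        simp only [List.getD_cons_succ, List.getD_cons_zero]
        calc w * (n + 0) = w * n := by ring
          _ ≤ (v + v / n) * n := this
          _ = v * n + v / n * n := by ring
          _ ≤ v * n + v := by omega
          _ = v * (n + 0 + 1) := by ring
    | succ j =>
      have := chain_step t (n+1) _ (by omega) hc j (by simpa using hj)
      simp only [List.getD_cons_succ]
      have e1 : n + 1 + j = n + (j + 1) := by omega
      rw [e1] at this
      exact this

lemma chain_of :
    ∀ (l : List ℕ) (n B : ℕ), 1 ≤ n →
      (0 < l.length → l.getD 0 0 < B) →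
      (∀ j, j + 1 < l.length → l.getD (j+1) 0 * (n + j) ≤ l.getD j 0 * (n + j + 1)) →
      ChainV n B l
  | [], _, _, _, _, _ => trivial
  | v :: t, n, B, hn, h0, hstep => by
    refine chainV_cons.2 ⟨by simpa using h0 (by simp), ?_⟩
    refine chain_of t (n+1) _ (by omega) ?_ ?_
    · intro ht
      cases t with
      | nil => simp at ht
      | cons w s =>
        have := hstep 0 (by simp)
        simp only [List.getD_cons_succ, List.getD_cons_zero] at this
        show w < v + v / n + 1
        have hwn : w * n ≤ v * (n + 1) := by simpa using this
        have : w ≤ v * (n + 1) / n := (Nat.le_div_iff_mul_le (by omega)).2 hwn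
        have hdiv : v * (n + 1) / n = v + v / n := by
          have : v * (n + 1) = n * v + v := by ring
          rw [this, Nat.mul_add_div (by omega)]
        omega
    · intro j hj
      have := hstep (j+1) (by simpa using hj)
      simp only [List.getD_cons_succ] at this
      have e1 : n + (j + 1) = n + 1 + j := by omega
      rw [e1] at this
      exact this

/-- the one-row cell set -/
lemma cells_eq (k : ℕ) :
    skewCells (rowShape k) (fun _ => 0) 1 = {1} ×ˢ Finset.Icc 1 k := by
  ext c
  obtain ⟨a, b⟩ := c
  simp only [skewCells, rowShape, Finset.mem_filter, Finset.mem_product, Finset.mem_Icc,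
    Finset.mem_singleton, if_true, eq_self_iff_true]
  constructor
  · rintro ⟨⟨⟨h1, h2⟩, h3⟩, h4, h5⟩
    have ha : a = 1 := by omega
    subst ha
    simp only [if_pos rfl] at h5
    exact ⟨rfl, by omega, h5⟩
  · rintro ⟨h1, h2, h3⟩
    subst h1
    simp only [if_pos rfl]
    exact ⟨⟨⟨le_rfl, le_rfl⟩, by omega, h3⟩, by omega, h3⟩

/-- encoding a value-list as a tableau function -/
def enc (l : List ℕ) : (ℕ × ℕ) → ℕ := fun c =>
  if c.1 = 1 ∧ 1 ≤ c.2 then l.getD (c.2 - 1) 0 else 0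

lemma enc_val (l : List ℕ) (j : ℕ) (hj : 1 ≤ j) : enc l (1, j) = l.getD (j - 1) 0 := by
  simp [enc, hj]

lemma lht_set_eq (n m k : ℕ) (hn : 1 ≤ n) :
    LHTb n m (skewCells (rowShape k) (fun _ => 0) 1) =
      enc '' (↑(Vset n k (m * n)) : Set (List ℕ)) := by
  ext T
  simp only [Set.mem_image, Finset.mem_coe]
  constructor
  · rintro ⟨hz, hrow, hcol, hbd⟩
    refine ⟨(List.range k).map fun j => T (1, j + 1), ?_, ?_⟩
    · rw [mem_Vset]
      have hget : ∀ j, j < k → ((List.range k).map fun j => T (1, j + 1)).getD j 0 = T (1, j + 1) := by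
        intro j hj
        rw [List.getD_eq_getElem _ _ (by simpa using hj)]
        simp
      refine ⟨by simp, chain_of _ n _ hn ?_ ?_⟩
      · intro hl
        simp only [List.length_map, List.length_range] at hl
        rw [hget 0 hl]
        have := hbd (1, 1) (by rw [cells_eq]; simp; omega)
        simp only at this
        have e : n + 1 - 1 = n := by omega
        rw [e] at this
        exact (Nat.div_lt_iff_lt_mul (by omega)).1 this
      · intro j hj
        simp only [List.length_map, List.length_range] at hj
        rw [hget j (by omega), hget (j+1) (by omega)]
        have := hrow 1 (j + 1) (by rw [cells_eq]; simp; omega) (by rw [cells_eq]; simp; omega)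
        have e1 : n + (j + 1) - 1 = n + j := by omega
        have e2 : n + (j + 1) + 1 - 1 = n + j + 1 := by omega
        rw [e1, e2] at this
        exact this
    · funext c
      obtain ⟨c1, c2⟩ := c
      by_cases hc : c1 = 1 ∧ 1 ≤ c2 ∧ c2 ≤ k
      · obtain ⟨rfl, h1, h2⟩ := hc
        rw [enc_val _ _ h1]
        rw [List.getD_eq_getElem _ _ (by simp; omega)]
        simp only [List.getElem_map, List.getElem_range]
        have e : c2 - 1 + 1 = c2 := by omega
        rw [e]
      · have hnc : (c1, c2) ∉ skewCells (rowShape k) (fun _ => 0) 1 := by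
          rw [cells_eq]; simp; omega
        rw [hz _ hnc]
        simp only [enc]
        split
        · next h =>
            obtain ⟨rfl, h1⟩ := h
            have h2 : k < c2 := by omega
            rw [List.getD_eq_default]
            simp only [List.length_map, List.length_range]
            omega
        · rfl
  · rintro ⟨l, hl, rfl⟩
    rw [mem_Vset] at hl
    obtain ⟨hlen, hchain⟩ := hl
    have hget : ∀ j, 1 ≤ j → j ≤ k → enc l (1, j) = l.getD (j - 1) 0 := fun j hj _ => enc_val l j hj
    refine ⟨?_, ?_, ?_, ?_⟩
    · intro c hc
      rw [cells_eq] at hc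
      simp only [Finset.mem_product, Finset.mem_singleton, Finset.mem_Icc, not_and, not_le] at hc
      simp only [enc]
      split
      · next h =>
          obtain ⟨h1, h2⟩ := h
          have h3 : k < c.2 := hc h1 h2
          rw [List.getD_eq_default]
          omega
      · rfl
    · intro i j hij hij1
      rw [cells_eq] at hij hij1
      simp only [Finset.mem_product, Finset.mem_singleton, Finset.mem_Icc] at hij hij1
      obtain ⟨hi1, hj1, hjk⟩ := hij
      obtain ⟨-, -, hjk1⟩ := hij1
      subst hi1
      rw [enc_val _ _ (by omega : (1:ℕ) ≤ j + 1), enc_val _ _ (by omega : (1:ℕ) ≤ j)]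
      have := chain_step l n _ hn hchain (j - 1) (by omega)
      have e0 : j - 1 + 1 = j + 1 - 1 := by omega
      have e1 : n + (j - 1) = n + j - 1 := by omega
      rw [e0, e1] at this
      have e2 : n + j - 1 + 1 = n + j + 1 - 1 := by omega
      rw [e2] at this
      exact this
    · intro i j hij hij1
      rw [cells_eq] at hij hij1
      simp only [Finset.mem_product, Finset.mem_singleton, Finset.mem_Icc] at hij hij1
      omega
    · intro c hc
      rw [cells_eq] at hc
      simp only [Finset.mem_product, Finset.mem_singleton, Finset.mem_Icc] at hc
      obtain ⟨c1, c2⟩ := c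
      obtain ⟨hc1, hc2, hc3⟩ := hc
      simp only at hc1 hc2 hc3 ⊢
      subst hc1
      rw [enc_val _ _ hc2]
      have := chain_getD_lt m l n _ hn hchain le_rfl (c2 - 1) (by omega)
      have e : n + (c2 - 1) = n + c2 - 1 := by omega
      rw [e] at this
      exact this

section Ring2
variable {R : Type*} [CommRing R]

lemma wlist_eq (x : ℕ → R) : ∀ (l : List ℕ) (n : ℕ),
    wlist x n l = ∏ j ∈ range l.length, x (l.getD j 0 / (n + j))
  | [], n => by simp [wlist]
  | v :: t, n => by
    rw [List.length_cons, Finset.prod_range_succ']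
    simp only [List.getD_cons_succ, List.getD_cons_zero]
    rw [show wlist x n (v :: t) = x (v / n) * wlist x (n+1) t from rfl,
      wlist_eq x t (n+1), add_zero, mul_comm]
    congr 1
    refine Finset.prod_congr rfl fun j _ => ?_
    congr 2
    omega

lemma enc_injOn (n m k : ℕ) :
    Set.InjOn enc (↑(Vset n k (m * n)) : Set (List ℕ)) := by
  intro l1 h1 l2 h2 he
  rw [Finset.mem_coe, mem_Vset] at h1 h2
  refine List.ext_getElem (by rw [h1.1, h2.1]) fun i hi1 hi2 => ?_
  have e1 : l1[i] = l1.getD i 0 := (List.getD_eq_getElem l1 0 hi1).symm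
  have e2 : l2[i] = l2.getD i 0 := (List.getD_eq_getElem l2 0 hi2).symm
  rw [e1, e2]
  have := congrFun he (1, i + 1)
  rwa [enc_val _ _ (by omega), enc_val _ _ (by omega), Nat.add_sub_cancel] at this

lemma prod_cells_eq (x : ℕ → R) (n k : ℕ) (l : List ℕ) (hlen : l.length = k) :
    ∏ c ∈ skewCells (rowShape k) (fun _ => 0) 1, x (enc l c / (n + c.2 - c.1)) =
      wlist x n l := by
  rw [cells_eq, Finset.prod_product, Finset.prod_singleton, wlist_eq, hlen,
    ← Finset.Ico_add_one_right_eq_Icc, Finset.prod_Ico_eq_prod_range]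
  simp only [Nat.add_sub_cancel]
  refine Finset.prod_congr rfl fun j _ => ?_
  rw [enc_val _ _ (by omega)]
  have e1 : 1 + j - 1 = j := by omega
  have e2 : n + (1 + j) - 1 = n + j := by omega
  rw [e1, e2]

end Ring2

end LhtOneRow

open LhtOneRow in
/-- **Proposition (one-row lecture hall generating polynomial).**
`L^n_{(k)}(x_0,…,x_{m-1}) = (x_0 + ⋯ + x_{m-1})^k · binom(n+k-1, k)`, for `n ≥ 1`.
Here `X r` denotes `x_r`. -/
theorem lht_one_row_gf (n m k : ℕ) (hn : 1 ≤ n) :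
    lhtGF n m (skewCells (rowShape k) (fun _ => 0) 1)
        (fun r => (MvPolynomial.X r : MvPolynomial ℕ ℤ)) =
      MvPolynomial.C (((n + k - 1).choose k : ℤ)) *
        (∑ r ∈ Finset.range m, MvPolynomial.X r) ^ k := by
  have h1 : lhtGF n m (skewCells (rowShape k) (fun _ => 0) 1)
      (fun r => (MvPolynomial.X r : MvPolynomial ℕ ℤ)) =
      ∑ᶠ T ∈ LHTb n m (skewCells (rowShape k) (fun _ => 0) 1),
        ∏ c ∈ skewCells (rowShape k) (fun _ => 0) 1,
          (MvPolynomial.X (T c / (n + c.2 - c.1)) : MvPolynomial ℕ ℤ) := rfl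
  rw [h1, lht_set_eq n m k hn,
    finsum_mem_image (enc_injOn n m k), finsum_mem_coe_finset]
  have h2 : ∀ l ∈ Vset n k (m * n),
      (∏ c ∈ skewCells (rowShape k) (fun _ => 0) 1,
        (MvPolynomial.X (enc l c / (n + c.2 - c.1)) : MvPolynomial ℕ ℤ)) =
      wlist (fun r => (MvPolynomial.X r : MvPolynomial ℕ ℤ)) n l := by
    intro l hl
    exact prod_cells_eq _ n k l ((mem_Vset k n (m*n) l).1 hl).1
  rw [Finset.sum_congr rfl h2, vset_sum_top _ n m hn k]
  congr 1
end

section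
/- Let a, t be nonnegative integers. Then, as polynomials in the variables y_0,…,y_a and X, h_t(y_0 + X, y_1 + X, …, y_a + X) = Σ_{k=0}^{t} h_k(y_0,…,y_a) · X^{t−k} · binom(a+t, t−k). -/
open Finset MvPolynomial

lemma hpoly_zero {R : Type*} [CommSemiring R] (a : ℕ) (z : ℕ → R) : hpoly 0 a z = 1 := by
  simp only [hpoly, Finset.sym_zero, Finset.sum_singleton]
  rfl

lemma hpoly_zero_var {R : Type*} [CommSemiring R] (k : ℕ) (z : ℕ → R) :
    hpoly k 0 z = z 0 ^ k := by
  simp only [hpoly]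
  rw [show Finset.range 1 = {0} by rfl, Finset.sym_singleton]
  rw [Finset.sum_singleton]
  simp [Sym.replicate]

lemma hpoly_rec {R : Type*} [CommSemiring R] (k a : ℕ) (z : ℕ → R) :
    hpoly (k+1) (a+1) z = hpoly (k+1) a z + z (a+1) * hpoly k (a+1) z := by
  classical
  have hsplit : (Finset.range (a+2)).sym (k+1) =
      ((Finset.range (a+2)).sym (k+1)).filter (fun s => (a+1) ∈ s) ∪
      ((Finset.range (a+2)).sym (k+1)).filter (fun s => (a+1) ∉ s) :=
    (Finset.filter_union_filter_not_eq _ _).symm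
  have h1 : ((Finset.range (a+2)).sym (k+1)).filter (fun s => (a+1) ∉ s) =
      (Finset.range (a+1)).sym (k+1) := by
    ext s
    simp only [Finset.mem_filter, Finset.mem_sym_iff, Finset.mem_range]
    constructor
    · rintro ⟨h, hn⟩ b hb
      have := h b hb
      have : b ≠ a + 1 := fun e => hn (e ▸ hb)
      omega
    · intro h
      exact ⟨fun b hb => by have := h b hb; omega,
        fun hm => by have := h _ hm; omega⟩
  have h2 : ∑ s ∈ ((Finset.range (a+2)).sym (k+1)).filter (fun s => (a+1) ∈ s),
      (Multiset.map z s.1).prod = z (a+1) * hpoly k (a+1) z := by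
    rw [hpoly, Finset.mul_sum]
    refine Finset.sum_bij' (fun s hs => Sym.erase s (a+1) (Finset.mem_filter.mp hs).2)
      (fun s hs => Sym.cons (a+1) s) ?_ ?_ ?_ ?_ ?_
    · intro s hs
      have hm := Finset.mem_filter.mp hs
      rw [Finset.mem_sym_iff]
      intro b hb
      have hbs : b ∈ s := Multiset.mem_of_mem_erase hb
      exact Finset.mem_sym_iff.mp hm.1 b hbs
    · intro s hs
      rw [Finset.mem_filter]
      constructor
      · rw [Finset.mem_sym_iff]
        intro b hb
        rcases Sym.mem_cons.mp hb with h | h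
        · subst h; simp
        · exact Finset.mem_sym_iff.mp hs b h
      · exact Sym.mem_cons_self _ _
    · intro s hs
      exact Sym.cons_erase _
    · intro s hs
      exact Sym.erase_cons_head _ _ _
    · intro s hs
      conv_lhs => rw [← Sym.cons_erase (Finset.mem_filter.mp hs).2]
      simp [Sym.cons, Multiset.map_cons]
  rw [hpoly]
  rw [show a + 1 + 1 = a + 2 from rfl, hsplit, Finset.sum_union]
  · rw [h1, h2, add_comm]
    simp only [hpoly]
  · exact Finset.disjoint_filter_filter_not _ _ _

lemma key_alg {R : Type*} [CommSemiring R] (A B : ℕ → R) (W P : R) (t N : ℕ)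
    (hB0 : B 0 = 1) (hA0 : A 0 = 1)
    (hrec : ∀ k, B (k+1) = A (k+1) + W * B k) :
    (∑ k ∈ range (t+2), A k * P^(t+1-k) * (N.choose (t+1-k) : R))
      + (W+P) * ∑ k ∈ range (t+1), B k * P^(t-k) * (N.choose (t-k) : R)
      = ∑ k ∈ range (t+2), B k * P^(t+1-k) * ((N+1).choose (t+1-k) : R) := by
  have h1 : ∑ k ∈ range (t+2), A k * P^(t+1-k) * (N.choose (t+1-k) : R)
      = (∑ k ∈ range t, A (k+1) * P^(t-k) * (N.choose (t-k) : R)) + A (t+1)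
        + P^(t+1) * (N.choose (t+1) : R) := by
    rw [Finset.sum_range_succ' (fun k => A k * P^(t+1-k) * (N.choose (t+1-k) : R)) (t+1),
      Finset.sum_range_succ]
    simp [hA0, Nat.succ_sub_succ]
  have hW : W * ∑ k ∈ range (t+1), B k * P^(t-k) * (N.choose (t-k) : R)
      = (∑ k ∈ range t, W * (B k * P^(t-k) * (N.choose (t-k) : R))) + W * B t := by
    rw [Finset.mul_sum, Finset.sum_range_succ]
    simp
  have hP : P * ∑ k ∈ range (t+1), B k * P^(t-k) * (N.choose (t-k) : R)
      = (∑ k ∈ range t, (A (k+1) * P^(t-k) * (N.choose (t-k-1) : R)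
          + W * (B k * P^(t-k) * (N.choose (t-k-1) : R))))
        + P^(t+1) * (N.choose t : R) := by
    rw [Finset.mul_sum, Finset.sum_range_succ' (fun k => P * (B k * P^(t-k) * (N.choose (t-k) : R))) t]
    congr 1
    · refine Finset.sum_congr rfl fun k hk => ?_
      have hk' : k < t := Finset.mem_range.mp hk
      obtain ⟨j, hj⟩ : ∃ j, t - k = j + 1 := ⟨t - k - 1, by omega⟩
      rw [show t - (k+1) = j from by omega, hj, Nat.add_sub_cancel, pow_succ, hrec k]
      ring
    · rw [hB0]
      simp only [Nat.sub_zero, one_mul]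
      ring
  have hR : ∑ k ∈ range (t+2), B k * P^(t+1-k) * ((N+1).choose (t+1-k) : R)
      = (∑ k ∈ range t, (A (k+1) * P^(t-k) * (N.choose (t-k) : R)
          + A (k+1) * P^(t-k) * (N.choose (t-k-1) : R)
          + W * (B k * P^(t-k) * (N.choose (t-k) : R))
          + W * (B k * P^(t-k) * (N.choose (t-k-1) : R))))
        + A (t+1) + W * B t
        + P^(t+1) * (N.choose (t+1) : R) + P^(t+1) * (N.choose t : R) := by
    rw [Finset.sum_range_succ' (fun k => B k * P^(t+1-k) * ((N+1).choose (t+1-k) : R)) (t+1),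
      Finset.sum_range_succ]
    have hmid : ∀ k ∈ range t, B (k+1) * P^(t+1-(k+1)) * (((N+1)).choose (t+1-(k+1)) : R)
        = A (k+1) * P^(t-k) * (N.choose (t-k) : R)
          + A (k+1) * P^(t-k) * (N.choose (t-k-1) : R)
          + W * (B k * P^(t-k) * (N.choose (t-k) : R))
          + W * (B k * P^(t-k) * (N.choose (t-k-1) : R)) := by
      intro k hk
      have hk' : k < t := Finset.mem_range.mp hk
      obtain ⟨j, hj⟩ : ∃ j, t - k = j + 1 := ⟨t - k - 1, by omega⟩
      rw [show t + 1 - (k+1) = t - k from by omega, hj, Nat.add_sub_cancel,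
        Nat.choose_succ_succ, hrec k]
      push_cast
      ring
    rw [Finset.sum_congr rfl hmid]
    rw [show t + 1 - (t+1) = 0 from by omega, show t + 1 - 0 = t + 1 from rfl, hB0,
      hrec t, Nat.choose_succ_succ]
    push_cast
    simp only [pow_zero, Nat.choose_zero_right]
    push_cast
    ring
  rw [h1, add_mul, hW, hP, hR]
  simp only [Finset.sum_add_distrib]
  ring

/-- **Complete homogeneous shift identity.**
`h_t(y_0+X,…,y_a+X) = Σ_{k=0}^{t} h_k(y_0,…,y_a) · X^{t-k} · binom(a+t, t-k)`,
as polynomials in `y_0,…,y_a` and `X`. Here the variable `some i` denotes `y_i` and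
`none` denotes `X`. -/
theorem hpoly_shift (a t : ℕ) :
    hpoly t a (fun i => (MvPolynomial.X (some i) : MvPolynomial (Option ℕ) ℤ) +
        MvPolynomial.X none) =
      ∑ k ∈ Finset.range (t + 1),
        hpoly k a (fun i => (MvPolynomial.X (some i) : MvPolynomial (Option ℕ) ℤ)) *
          (MvPolynomial.X none) ^ (t - k) *
          MvPolynomial.C (((a + t).choose (t - k) : ℤ)) := by
    classical
  have hc : ∀ n : ℕ, (MvPolynomial.C ((n : ℤ)) : MvPolynomial (Option ℕ) ℤ)
      = (n : MvPolynomial (Option ℕ) ℤ) := fun n => by simp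
  simp only [hc]
  induction a generalizing t with
  | zero =>
    simp only [hpoly_zero_var, Nat.zero_add]
    rw [add_pow]
    refine Finset.sum_congr rfl fun k hk => ?_
    have hk' : k ≤ t := by simpa [Nat.lt_succ_iff] using hk
    rw [Nat.choose_symm hk']
  | succ a ih =>
    induction t with
    | zero => simp [hpoly_zero]
    | succ t iht =>
      rw [show hpoly (t+1) (a+1) (fun i => (MvPolynomial.X (some i) : MvPolynomial (Option ℕ) ℤ) +
          MvPolynomial.X none) = hpoly (t+1) a (fun i => (MvPolynomial.X (some i) :
            MvPolynomial (Option ℕ) ℤ) + MvPolynomial.X none) +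
          ((MvPolynomial.X (some (a+1)) : MvPolynomial (Option ℕ) ℤ) + MvPolynomial.X none) *
          hpoly t (a+1) (fun i => (MvPolynomial.X (some i) : MvPolynomial (Option ℕ) ℤ) +
            MvPolynomial.X none) from hpoly_rec t a _, ih (t+1), iht]
      rw [show a + (t+1) = a + t + 1 from rfl,
        show a + 1 + t = a + t + 1 by omega,
        show a + 1 + (t + 1) = (a + t + 1) + 1 by omega]
      exact key_alg (fun k => hpoly k a fun i => (MvPolynomial.X (some i) :
          MvPolynomial (Option ℕ) ℤ))
        (fun k => hpoly k (a+1) fun i => (MvPolynomial.X (some i) : MvPolynomial (Option ℕ) ℤ))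
        (MvPolynomial.X (some (a+1))) (MvPolynomial.X none) t (a+t+1)
        (hpoly_zero _ _) (hpoly_zero _ _) (fun k => hpoly_rec k a _)
end
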